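/- Let Φ_F be the semiflow of x' = F(x) with F Lipschitz (β) and α := β + ‖F(0)‖, and let u be θ-Hölder continuous with constant C (|u(x) − u(y)| ≤ C‖x−y‖^θ, 0 < θ ≤ 1 with θ ≤ p). Then for weighted norm κ(x) = (1+‖x‖)^{−p}, sup_x κ(x)|u(Φ_F(t,x)) − u(x)| ≤ C (e^{αt} − 1)^θ, which tends to 0 as t → 0. -/

import Mathlib

theorem stmt16 {X : Type*} [NormedAddCommGroup X] [NormedSpace ℝ X]
    (F : X → X) (β : ℝ) (hβ : 0 ≤ β)
    (hF : ∀ x y, ‖F x - F y‖ ≤ β * ‖x - y‖)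
    (α : ℝ) (hα : α = β + ‖F 0‖)
    (Φ : ℝ → X → X)
    (hΦ0 : ∀ x, Φ 0 x = x)
    (hΦd : ∀ x t, 0 ≤ t →
      HasDerivWithinAt (fun s => Φ s x) (F (Φ t x)) (Set.Ici 0) t)
    (p θ : ℝ) (hp : 0 < p) (hθ0 : 0 < θ) (hθ1 : θ ≤ 1) (hθp : θ ≤ p)
    (u : X → ℝ) (C : ℝ) (hC : 0 ≤ C)
    (hHolder : ∀ x y, |u x - u y| ≤ C * ‖x - y‖ ^ θ) :
    (∀ t, 0 ≤ t → ∀ x,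
      (1 + ‖x‖) ^ (-p) * |u (Φ t x) - u x| ≤ C * (Real.exp (α * t) - 1) ^ θ) ∧
    Filter.Tendsto (fun t => C * (Real.exp (α * t) - 1) ^ θ)
      (nhdsWithin 0 (Set.Ici 0)) (nhds 0) := by
  have hα0 : 0 ≤ α := hα ▸ add_nonneg hβ (norm_nonneg _)
  have hβα : β ≤ α := hα ▸ le_add_of_nonneg_right (norm_nonneg _)
  constructor
  · intro t ht x
    -- flow displacement bound via Gronwall
    have hflow : ‖Φ t x - x‖ ≤ (1 + ‖x‖) * (Real.exp (α * t) - 1) := by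
      have key : ∀ s ∈ Set.Icc (0:ℝ) t,
          ‖Φ s x - x‖ ≤ gronwallBound 0 α (α * (1 + ‖x‖)) (s - 0) := by
        apply norm_le_gronwallBound_of_norm_deriv_right_le
          (f' := fun s => F (Φ s x))
        · intro s hs
          exact (((hΦd x s hs.1).sub_const x).continuousWithinAt).mono
            (fun y hy => hy.1)
        · intro s hs
          exact (((hΦd x s hs.1).sub_const x)).mono (Set.Ici_subset_Ici.2 hs.1)
        · simp [hΦ0]
        · intro s hs
          have h1 : ‖F (Φ s x) - F x‖ ≤ β * ‖Φ s x - x‖ := hF _ _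
          have h2 : ‖F x - F 0‖ ≤ β * ‖x - 0‖ := hF _ _
          have h3 : ‖F (Φ s x)‖ ≤ ‖F (Φ s x) - F x‖ + ‖F x - F 0‖ + ‖F 0‖ :=
            calc ‖F (Φ s x)‖ = ‖(F (Φ s x) - F x) + (F x - F 0) + F 0‖ := by
                  congr 1; abel
              _ ≤ _ := norm_add₃_le
          have hn : (0:ℝ) ≤ ‖Φ s x - x‖ := norm_nonneg _
          have hx0 : (0:ℝ) ≤ ‖x‖ := norm_nonneg _
          have hF0 : ‖F 0‖ ≤ α := hα ▸ le_add_of_nonneg_left hβ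
          rw [sub_zero] at h2
          nlinarith [mul_le_mul_of_nonneg_right hβα hn,
            mul_le_mul_of_nonneg_right hβα hx0]
      have := key t ⟨le_refl 0 |>.trans ht, le_rfl⟩
      rw [sub_zero] at this
      refine this.trans (le_of_eq ?_)
      by_cases hαz : α = 0
      · simp [hαz, gronwallBound]
      · rw [gronwallBound_of_K_ne_0 hαz]
        field_simp
        ring
    have he : (0:ℝ) ≤ Real.exp (α * t) - 1 := by
      have : (1:ℝ) ≤ Real.exp (α * t) := Real.one_le_exp (by positivity)
      linarith
    have hx1 : (1:ℝ) ≤ 1 + ‖x‖ := le_add_of_nonneg_right (norm_nonneg _)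
    have hx1' : (0:ℝ) < 1 + ‖x‖ := lt_of_lt_of_le one_pos hx1
    calc (1 + ‖x‖) ^ (-p) * |u (Φ t x) - u x|
        ≤ (1 + ‖x‖) ^ (-p) * (C * ‖Φ t x - x‖ ^ θ) := by
          exact mul_le_mul_of_nonneg_left (hHolder _ _)
            (Real.rpow_nonneg hx1'.le _)
      _ ≤ (1 + ‖x‖) ^ (-p) * (C * ((1 + ‖x‖) * (Real.exp (α * t) - 1)) ^ θ) := by
          refine mul_le_mul_of_nonneg_left (mul_le_mul_of_nonneg_left ?_ hC)
            (Real.rpow_nonneg hx1'.le _)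
          exact Real.rpow_le_rpow (norm_nonneg _) hflow hθ0.le
      _ = C * (1 + ‖x‖) ^ (θ - p) * (Real.exp (α * t) - 1) ^ θ := by
          rw [Real.mul_rpow hx1'.le he, Real.rpow_sub hx1', Real.rpow_neg hx1'.le]
          field_simp
      _ ≤ C * 1 * (Real.exp (α * t) - 1) ^ θ := by
          refine mul_le_mul_of_nonneg_right (mul_le_mul_of_nonneg_left ?_ hC)
            (Real.rpow_nonneg he _)
          calc (1 + ‖x‖) ^ (θ - p) ≤ (1 + ‖x‖) ^ (0:ℝ) :=
                Real.rpow_le_rpow_of_exponent_le hx1 (by linarith)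
            _ = 1 := Real.rpow_zero _
      _ = C * (Real.exp (α * t) - 1) ^ θ := by ring
  · have hcont : ContinuousAt (fun t => C * (Real.exp (α * t) - 1) ^ θ) 0 := by
      exact continuousAt_const.mul
        (((by fun_prop : ContinuousAt (fun t => Real.exp (α * t) - 1) 0)).rpow_const
          (Or.inr hθ0.le))
    have h0 : C * (Real.exp (α * 0) - 1) ^ θ = 0 := by
      simp [Real.rpow_eq_zero_iff_of_nonneg, hθ0.ne']
    have := hcont.continuousWithinAt (s := Set.Ici 0)
    rw [ContinuousWithinAt, h0] at this
    exact this
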